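/- Let A be an n×n complex matrix, and let I ⊆ [n]. For each i, let K_i be the closed disc in ℂ centered at A_{ii} with radius ∑_{k≠i} |A_{ik}|. If ∪_{i∈I} K_i is disjoint from ∪_{i∉I} K_i, then exactly |I| eigenvalues of A (counted with algebraic multiplicity) lie in ∪_{i∈I} K_i. -/

import Mathlib

open Polynomial Metric Set Filter Topology

namespace Stmt12Aux

lemma exists_enum {α : Type*} {n : ℕ} {s : Multiset α} (h : Multiset.card s = n) :
    ∃ g : Fin n → α, s = Multiset.map g Finset.univ.val := by
  induction s using Quotient.inductionOn with
  | h l =>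
    simp only [Multiset.quot_mk_to_coe, Multiset.coe_card] at h
    subst h
    exact ⟨l.get, by simp [Fin.univ_val_map, List.ofFn_get]⟩

open Classical in
lemma count_aux {n : ℕ} (U : Set ℂ) (g : Fin n → ℂ) :
    Multiset.card (Multiset.filter (· ∈ U) (Multiset.map g Finset.univ.val)) =
      (Finset.univ.filter fun j => g j ∈ U).card := by
  rw [← Multiset.countP_eq_card_filter, Multiset.countP_map, Finset.card_def,
    Finset.filter_val, ← Multiset.countP_eq_card_filter]

open Classical in
lemma count_eventually_const {n : ℕ} (U V : Set ℂ) (hU : IsCompact U) (hV : IsCompact V)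
    (hd : Disjoint U V) (p : ℝ → Polynomial ℂ)
    (hm : ∀ t, (p t).Monic) (hdeg : ∀ t, (p t).natDegree = n)
    (hroots : ∀ t, ∀ z ∈ (p t).roots, z ∈ U ∪ V)
    (hcont : ∀ w : ℂ, Continuous fun t => (p t).eval w) (t₀ : ℝ) :
    ∀ᶠ t in 𝓝 t₀, Multiset.card (Multiset.filter (· ∈ U) (p t).roots) =
      Multiset.card (Multiset.filter (· ∈ U) (p t₀).roots) := by
  by_contra hcon
  have hcard : ∀ t, Multiset.card (p t).roots = n := fun t => by
    rw [← hdeg t]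
    exact Polynomial.splits_iff_card_roots.mp (IsAlgClosed.splits (p t))
  have hfreq := Filter.not_eventually.mp hcon
  have hseq : ∀ k : ℕ, ∃ t, |t - t₀| < 1 / (k + 1) ∧
      Multiset.card (Multiset.filter (· ∈ U) (p t).roots) ≠
      Multiset.card (Multiset.filter (· ∈ U) (p t₀).roots) := by
    intro k
    have hpos : (0 : ℝ) < 1 / (k + 1) := by positivity
    have hev : ∀ᶠ t in 𝓝 t₀, |t - t₀| < 1 / (k + 1) := by
      filter_upwards [Metric.ball_mem_nhds t₀ hpos] with t ht
      simpa [Real.dist_eq] using ht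
    exact (hev.and_frequently hfreq).exists
  choose t ht1 ht2 using hseq
  have htt : Filter.Tendsto t Filter.atTop (𝓝 t₀) := by
    rw [Metric.tendsto_atTop]
    intro ε hε
    obtain ⟨N, hN⟩ := exists_nat_one_div_lt hε
    refine ⟨N, fun k hk => ?_⟩
    have h1 : (1 : ℝ) / (k + 1) ≤ 1 / (N + 1) := by
      apply one_div_le_one_div_of_le (by positivity)
      exact_mod_cast Nat.succ_le_succ hk
    calc dist (t k) t₀ = |t k - t₀| := Real.dist_eq _ _
      _ < 1 / (k + 1) := ht1 k
      _ ≤ 1 / (N + 1) := h1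
      _ < ε := hN
  choose Z hZ using fun k => exists_enum (hcard (t k))
  have hZmem : ∀ k j, Z k j ∈ U ∪ V := fun k j =>
    hroots _ _ (by rw [hZ k]; exact Multiset.mem_map_of_mem _ (Finset.mem_univ j))
  have hcpt : IsCompact (Set.univ.pi fun _ : Fin n => U ∪ V) :=
    isCompact_univ_pi fun _ => hU.union hV
  obtain ⟨zl, hzl, φ, hφ, hZt⟩ := hcpt.tendsto_subseq
    (x := Z) (fun k => Set.mem_univ_pi.mpr fun j => hZmem k j)
  have hcoord : ∀ j, Tendsto (fun k => Z (φ k) j) atTop (𝓝 (zl j)) :=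
    fun j => tendsto_pi_nhds.mp hZt j
  have heval : ∀ k w, (p (t k)).eval w = ∏ j, (w - Z k j) := by
    intro k w
    have h1 : p (t k) = (Multiset.map (fun a => X - C a) (p (t k)).roots).prod :=
      (IsAlgClosed.splits _).eq_prod_roots_of_monic (hm _)
    rw [h1, hZ k, Multiset.map_map, eval_multiset_prod, Multiset.map_map,
      Finset.prod_eq_multiset_prod]
    congr 1
    ext j
    simp
  have hlim : p t₀ = ∏ j, (X - C (zl j)) := by
    apply Polynomial.funext
    intro w
    have h1 : Tendsto (fun k => (p (t (φ k))).eval w) atTop (𝓝 ((p t₀).eval w)) :=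
      ((hcont w).continuousAt (x := t₀)).tendsto.comp (htt.comp hφ.tendsto_atTop)
    have h2 : Tendsto (fun k => (p (t (φ k))).eval w) atTop (𝓝 (∏ j, (w - zl j))) := by
      simp only [heval]
      exact tendsto_finset_prod _ fun j _ => tendsto_const_nhds.sub (hcoord j)
    rw [tendsto_nhds_unique h1 h2]
    simp [eval_prod]
  have hroots₀ : (p t₀).roots = Multiset.map zl Finset.univ.val := by
    rw [hlim, Finset.prod_eq_multiset_prod,
      show (fun j => X - C (zl j)) = ((fun a => X - C a) ∘ zl) from rfl,
      ← Multiset.map_map, roots_multiset_prod_X_sub_C]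
  obtain ⟨δ, hδ0, hdisj2⟩ := hd.exists_thickenings hU hV.isClosed
  have hev : ∀ᶠ k in atTop, ∀ j, (Z (φ k) j ∈ U ↔ zl j ∈ U) := by
    rw [eventually_all]
    intro j
    by_cases hj : zl j ∈ U
    · have h1 : ∀ᶠ k in atTop, Z (φ k) j ∈ Metric.thickening δ U :=
        (hcoord j).eventually
          (Metric.isOpen_thickening.mem_nhds (Metric.self_subset_thickening hδ0 U hj))
      filter_upwards [h1] with k hk
      have h2 : Z (φ k) j ∉ V := fun hv =>
        Set.disjoint_left.mp hdisj2 hk (Metric.self_subset_thickening hδ0 V hv)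
      simp [hj, (hZmem (φ k) j).resolve_right h2]
    · have hjV : zl j ∈ V := (hzl j (Set.mem_univ j)).resolve_left hj
      have h1 : ∀ᶠ k in atTop, Z (φ k) j ∈ Metric.thickening δ V :=
        (hcoord j).eventually
          (Metric.isOpen_thickening.mem_nhds (Metric.self_subset_thickening hδ0 V hjV))
      filter_upwards [h1] with k hk
      have h2 : Z (φ k) j ∉ U := fun hu =>
        Set.disjoint_left.mp hdisj2 (Metric.self_subset_thickening hδ0 U hu) hk
      simp [hj, h2]
  obtain ⟨k, hk⟩ := hev.exists
  apply ht2 (φ k)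
  calc Multiset.card (Multiset.filter (· ∈ U) (p (t (φ k))).roots)
      = (Finset.univ.filter fun j => Z (φ k) j ∈ U).card := by rw [hZ, count_aux]
    _ = (Finset.univ.filter fun j => zl j ∈ U).card := by
        congr 1
        exact Finset.filter_congr fun j _ => by simp [hk j]
    _ = Multiset.card (Multiset.filter (· ∈ U) (p t₀).roots) := by rw [hroots₀, count_aux]

end Stmt12Aux

open Classical in
/-- Disjoint-component refinement of the Gershgorin circle theorem: if the union of the
Gershgorin discs indexed by `I` is disjoint from the union of the remaining discs, then
exactly `|I|` eigenvalues (roots of the characteristic polynomial, with multiplicity)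
lie in the former union. -/
theorem stmt_12 (n : ℕ) (A : Matrix (Fin n) (Fin n) ℂ) (I : Finset (Fin n))
    (K : Fin n → Set ℂ)
    (hK : ∀ i, K i = Metric.closedBall (A i i) (∑ k ∈ Finset.univ.erase i, ‖A i k‖))
    (hdisj : Disjoint (⋃ i ∈ I, K i) (⋃ i ∈ (Iᶜ : Finset (Fin n)), K i)) :
    (((Matrix.charpoly A).roots.filter fun z => z ∈ ⋃ i ∈ I, K i).card) = I.card := by
  set U : Set ℂ := ⋃ i ∈ I, K i with hUdef
  set V : Set ℂ := ⋃ i ∈ (Iᶜ : Finset (Fin n)), K i with hVdef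
  have hUc : IsCompact U := I.finite_toSet.isCompact_biUnion fun i _ => by
    rw [hK i]; exact isCompact_closedBall _ _
  have hVc : IsCompact V := (Iᶜ : Finset (Fin n)).finite_toSet.isCompact_biUnion fun i _ => by
    rw [hK i]; exact isCompact_closedBall _ _
  have hKsub : ∀ i, K i ⊆ U ∪ V := by
    intro i
    by_cases hi : i ∈ I
    · exact (Set.subset_biUnion_of_mem (u := fun i => K i) hi).trans Set.subset_union_left
    · exact (Set.subset_biUnion_of_mem (u := fun i => K i)
        (Finset.mem_compl.mpr hi)).trans Set.subset_union_right
  have hKmem : ∀ i, A i i ∈ K i := by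
    intro i
    rw [hK i]
    exact Metric.mem_closedBall_self (Finset.sum_nonneg fun k _ => norm_nonneg _)
  -- the homotopy
  set c : ℝ → ℝ := fun s => max 0 (min s 1) with hcdef
  have hc : Continuous c := continuous_const.max (continuous_id.min continuous_const)
  have hc0 : ∀ s, 0 ≤ c s := fun s => le_max_left _ _
  have hc1 : ∀ s, c s ≤ 1 := fun s => max_le zero_le_one (min_le_right _ _)
  set Mt : ℝ → Matrix (Fin n) (Fin n) ℂ :=
    fun s => Matrix.of fun i j => if i = j then A i i else ((c s : ℝ) : ℂ) * A i j with hMt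
  set p : ℝ → Polynomial ℂ := fun s => (Mt s).charpoly with hp
  have hm : ∀ s, (p s).Monic := fun s => (Mt s).charpoly_monic
  have hdeg : ∀ s, (p s).natDegree = n := fun s => by
    rw [hp, Matrix.charpoly_natDegree_eq_dim, Fintype.card_fin]
  have hevaldet : ∀ s w, (p s).eval w =
      ((Matrix.charmatrix (Mt s)).map (Polynomial.evalRingHom w)).det := by
    intro s w
    rw [show (p s).eval w = (Polynomial.evalRingHom w) (Matrix.charmatrix (Mt s)).det from rfl,
      RingHom.map_det, RingHom.mapMatrix_apply]
  have hNeq : ∀ s (w : ℂ), (Matrix.charmatrix (Mt s)).map (Polynomial.evalRingHom w) =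
      w • (1 : Matrix (Fin n) (Fin n) ℂ) - Mt s := by
    intro s w
    ext i j
    by_cases h : i = j
    · subst h
      simp [Matrix.one_apply]
    · simp [Matrix.charmatrix_apply_ne _ _ _ h, Matrix.one_apply_ne h, h]
  have hcont : ∀ w : ℂ, Continuous fun s => (p s).eval w := by
    intro w
    simp only [hevaldet]
    apply Continuous.matrix_det
    apply continuous_matrix
    intro i j
    have hentry : (fun a => ((Matrix.charmatrix (Mt a)).map (Polynomial.evalRingHom w)) i j)
        = fun a => if i = j then w - A i i else -(((c a : ℝ) : ℂ) * A i j) := by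
      funext a
      by_cases h : i = j
      · subst h; simp [hMt]
      · simp [Matrix.charmatrix_apply_ne _ _ _ h, hMt, h]
    rw [hentry]
    split_ifs with h
    · exact continuous_const
    · exact ((Complex.continuous_ofReal.comp hc).mul continuous_const).neg
  have hroots : ∀ s, ∀ z ∈ (p s).roots, z ∈ U ∪ V := by
    intro s z hz
    have h0 : (p s).eval z = 0 := (Polynomial.isRoot_of_mem_roots hz)
    rw [hevaldet, hNeq] at h0
    obtain ⟨v, hv0, hv⟩ := Matrix.exists_mulVec_eq_zero_iff.mpr h0
    have hvec : (Mt s).mulVec v = z • v := by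
      rw [Matrix.sub_mulVec, Matrix.smul_mulVec, Matrix.one_mulVec, sub_eq_zero] at hv
      exact hv.symm
    have heig : Module.End.HasEigenvalue (Matrix.toLin' (Mt s)) z :=
      Module.End.hasEigenvalue_of_hasEigenvector
        ⟨Module.End.mem_eigenspace_iff.mpr (by rw [Matrix.toLin'_apply]; exact hvec), hv0⟩
    obtain ⟨k, hk⟩ := eigenvalue_mem_ball heig
    have hdiag : (Mt s) k k = A k k := by simp [hMt]
    have hrad : (∑ j ∈ Finset.univ.erase k, ‖(Mt s) k j‖) ≤
        ∑ j ∈ Finset.univ.erase k, ‖A k j‖ := by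
      apply Finset.sum_le_sum
      intro j hj
      have hjk : j ≠ k := Finset.ne_of_mem_erase hj
      have : (Mt s) k j = ((c s : ℝ) : ℂ) * A k j := by
        simp [hMt, (Ne.symm hjk : ¬ k = j)]
      rw [this, norm_mul, Complex.norm_real, Real.norm_eq_abs, abs_of_nonneg (hc0 s)]
      exact mul_le_of_le_one_left (norm_nonneg _) (hc1 s)
    have hzK : z ∈ K k := by
      rw [hK k]
      exact Metric.closedBall_subset_closedBall hrad (by rwa [hdiag] at hk)
    exact hKsub k hzK
  -- local constancy and endpoints
  have hloc : IsLocallyConstant fun s => Multiset.card (Multiset.filter (· ∈ U) (p s).roots) :=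
    (IsLocallyConstant.iff_eventually_eq _).2 fun s =>
      Stmt12Aux.count_eventually_const U V hUc hVc hdisj p hm hdeg hroots hcont s
  have hmain := hloc.apply_eq_of_preconnectedSpace 1 0
  have hM1 : Mt 1 = A := by
    ext i j
    by_cases h : i = j
    · simp [hMt, h]
    · simp [hMt, h, hcdef]
  have hM0 : Mt 0 = Matrix.diagonal fun i => A i i := by
    ext i j
    by_cases h : i = j
    · simp [hMt, h]
    · simp [hMt, h, hcdef, Matrix.diagonal_apply_ne _ h]
  have hp0 : p 0 = ∏ i, (X - C (A i i)) := by
    show (Mt 0).charpoly = _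
    rw [hM0, Matrix.charpoly_of_upperTriangular _ (Matrix.blockTriangular_diagonal _)]
    simp
  have hroots0 : (p 0).roots = Multiset.map (fun i => A i i) Finset.univ.val := by
    rw [hp0, Finset.prod_eq_multiset_prod,
      show (fun i => X - C (A i i)) = ((fun a => X - C a) ∘ fun i => A i i) from rfl,
      ← Multiset.map_map, roots_multiset_prod_X_sub_C]
  have hfilterI : (Finset.univ.filter fun i => A i i ∈ U) = I := by
    ext i
    simp only [Finset.mem_filter, Finset.mem_univ, true_and]
    constructor
    · intro hi
      by_contra hni
      exact Set.disjoint_left.mp hdisj hi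
        (Set.mem_biUnion (Finset.mem_compl.mpr hni) (hKmem i))
    · intro hi
      exact Set.mem_biUnion hi (hKmem i)
  have h0 : Multiset.card (Multiset.filter (· ∈ U) (p 0).roots) = I.card := by
    rw [hroots0, Stmt12Aux.count_aux, hfilterI]
  have h1 : Multiset.card (Multiset.filter (· ∈ U) (p 1).roots)
      = ((Matrix.charpoly A).roots.filter fun z => z ∈ U).card := by
    have hpA : p 1 = Matrix.charpoly A := by
      show (Mt 1).charpoly = _
      rw [hM1]
    rw [hpA]
  rw [← h1, hmain, h0]
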